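/- arXiv:1503.04410 — 2 statements merged into one kernel-verified Lean document; each statement's English description precedes it below -/
import Mathlib

section
/- Let L be a Boolean algebra, φ a faithful probability measure on L, and P, Q distinct atoms with φ(P ∨ Q) = 1. Then there exist no two distinct elements A, B ∈ L with φ(A ∧ B) > φ(A)·φ(B); i.e., there are no positively correlated pairs. -/
/-- Boolean algebra, faithful φ, distinct atoms P, Q with φ(P ∨ Q) = 1:
there are no two distinct positively correlated elements. -/
theorem no_correlation_of_two_atoms_full {L : Type*} [BooleanAlgebra L]
    (φ : L → ℝ)
    (hnonneg : ∀ a : L, 0 ≤ φ a)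
    (htop : φ ⊤ = 1)
    (hadd : ∀ a b : L, Disjoint a b → φ (a ⊔ b) = φ a + φ b)
    (hfaithful : ∀ a : L, φ a = 0 → a = ⊥)
    (P Q : L) (hP : IsAtom P) (hQ : IsAtom Q) (hPQ : P ≠ Q)
    (hsum : φ (P ⊔ Q) = 1) :
    ¬ ∃ A B : L, A ≠ B ∧ φ (A ⊓ B) > φ A * φ B := by
  have hbot : φ ⊥ = 0 := by
    have := hadd ⊥ ⊥ disjoint_bot_left
    simp at this; linarith
  -- P ⊔ Q = ⊤
  have hdisjPQ : Disjoint P Q := hP.disjoint_of_ne hQ hPQ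
  have hPQbot : P ⊓ Q = ⊥ := disjoint_iff.mp hdisjPQ
  have htopPQ : P ⊔ Q = ⊤ := by
    have h1 : φ ((P ⊔ Q) ⊔ (P ⊔ Q)ᶜ) = φ (P ⊔ Q) + φ ((P ⊔ Q)ᶜ) :=
      hadd _ _ disjoint_compl_right
    rw [sup_compl_eq_top, htop, hsum] at h1
    have : (P ⊔ Q)ᶜ = ⊥ := hfaithful _ (by linarith)
    have := congrArg compl this
    simpa using this
  have hp : 0 < φ P := by
    rcases lt_or_eq_of_le (hnonneg P) with h | h
    · exact h
    · exact absurd (hfaithful P h.symm) hP.1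
  have hq : 0 < φ Q := by
    rcases lt_or_eq_of_le (hnonneg Q) with h | h
    · exact h
    · exact absurd (hfaithful Q h.symm) hQ.1
  have hsum' : φ P + φ Q = 1 := by rw [← hadd P Q hdisjPQ, hsum]
  -- classification
  have hclass : ∀ A : L, A = ⊥ ∨ A = P ∨ A = Q ∨ A = ⊤ := by
    intro A
    have hA : A = (A ⊓ P) ⊔ (A ⊓ Q) := by
      rw [← inf_sup_left, htopPQ, inf_top_eq]
    have h1 : A ⊓ P = ⊥ ∨ A ⊓ P = P := hP.le_iff.mp inf_le_right
    have h2 : A ⊓ Q = ⊥ ∨ A ⊓ Q = Q := hQ.le_iff.mp inf_le_right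
    rcases h1 with h1 | h1 <;> rcases h2 with h2 | h2 <;>
      rw [h1, h2] at hA <;> simp [hA, htopPQ]
  rintro ⟨A, B, hne, hgt⟩
  rcases hclass A with rfl | rfl | rfl | rfl <;>
    rcases hclass B with rfl | rfl | rfl | rfl <;>
    simp_all [hPQbot, inf_comm] <;> nlinarith
end

section
/- Let L be a Boolean algebra with a faithful probability measure φ containing at least two distinct atoms P and Q. Then there exist two distinct elements A, B ∈ L with φ(A ∧ B) > φ(A)·φ(B) if and only if φ(P ∨ Q) < 1. -/
/-- Boolean algebra with faithful φ and two distinct atoms P, Q: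
there exist two distinct positively correlated elements iff φ(P ∨ Q) < 1. -/
theorem correlation_iff_lt_one {L : Type*} [BooleanAlgebra L]
    (φ : L → ℝ)
    (hnonneg : ∀ a : L, 0 ≤ φ a)
    (htop : φ ⊤ = 1)
    (hadd : ∀ a b : L, Disjoint a b → φ (a ⊔ b) = φ a + φ b)
    (hfaithful : ∀ a : L, φ a = 0 → a = ⊥)
    (P Q : L) (hP : IsAtom P) (hQ : IsAtom Q) (hPQ : P ≠ Q) :
    (∃ A B : L, A ≠ B ∧ φ (A ⊓ B) > φ A * φ B) ↔ φ (P ⊔ Q) < 1 := by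
  have hb0 : φ ⊥ = 0 := by
    have := hadd ⊥ ⊥ disjoint_bot_left
    simp at this
    linarith
  have hPpos : 0 < φ P :=
    (hnonneg P).lt_of_ne (fun h => hP.1 (hfaithful P h.symm))
  have hQpos : 0 < φ Q :=
    (hnonneg Q).lt_of_ne (fun h => hQ.1 (hfaithful Q h.symm))
  have hdisj : Disjoint P Q := hP.disjoint_of_ne hQ hPQ
  have hsum : φ (P ⊔ Q) = φ P + φ Q := hadd P Q hdisj
  constructor
  · rintro ⟨A, B, hAB, hcorr⟩
    by_contra h
    push_neg at h
    -- φ (P ⊔ Q) = 1, hence P ⊔ Q = ⊤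
    have h2 : φ (P ⊔ Q) + φ (P ⊔ Q)ᶜ = 1 := by
      have := hadd (P ⊔ Q) (P ⊔ Q)ᶜ disjoint_compl_right
      rw [sup_compl_eq_top] at this
      linarith [this]
    have hle : φ (P ⊔ Q) ≤ 1 := by linarith [hnonneg (P ⊔ Q)ᶜ]
    have heq : φ (P ⊔ Q) = 1 := le_antisymm hle h
    have hc0 : φ (P ⊔ Q)ᶜ = 0 := by linarith
    have htopPQ : P ⊔ Q = ⊤ := by
      have := hfaithful _ hc0
      rwa [compl_eq_bot] at this
    -- every element is ⊥, P, Q, or ⊤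
    have hclass : ∀ X : L, X = ⊥ ∨ X = P ∨ X = Q ∨ X = ⊤ := by
      intro X
      have hXP : X ⊓ P = ⊥ ∨ X ⊓ P = P := by
        rcases (inf_le_right : X ⊓ P ≤ P).lt_or_eq with h' | h'
        · exact Or.inl (hP.2 _ h')
        · exact Or.inr h'
      have hXQ : X ⊓ Q = ⊥ ∨ X ⊓ Q = Q := by
        rcases (inf_le_right : X ⊓ Q ≤ Q).lt_or_eq with h' | h'
        · exact Or.inl (hQ.2 _ h')
        · exact Or.inr h'
      have hX : X = (X ⊓ P) ⊔ (X ⊓ Q) := by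
        rw [← inf_sup_left, htopPQ, inf_top_eq]
      rcases hXP with h1 | h1 <;> rcases hXQ with h2 | h2 <;>
        rw [h1, h2] at hX <;> simp_all
    have hPQbot : P ⊓ Q = ⊥ := hdisj.eq_bot
    have hQPbot : Q ⊓ P = ⊥ := by rw [inf_comm]; exact hPQbot
    have hsum1 : φ P + φ Q = 1 := by rw [← hsum, htopPQ, htop]
    rcases hclass A with hA | hA | hA | hA <;>
      rcases hclass B with hB | hB | hB | hB <;>
      subst hA <;> subst hB <;>
      · first
        | exact hAB rfl
        | (simp only [bot_inf_eq, inf_bot_eq, top_inf_eq, inf_top_eq, inf_idem,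
            hPQbot, hQPbot, hb0, htop] at hcorr
           nlinarith [hPpos, hQpos, hsum1])
  · intro h
    refine ⟨P, P ⊔ Q, ?_, ?_⟩
    · intro hEq
      have : Q ≤ P := by rw [hEq]; exact le_sup_right
      rcases hP.le_iff.mp this with h' | h'
      · exact hQ.1 h'
      · exact hPQ h'.symm
    · have hinf : P ⊓ (P ⊔ Q) = P := inf_sup_self
      rw [hinf]
      nlinarith [hnonneg (P ⊔ Q)]
end
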